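/- With notation as before (G connected, B independent with |B| ≥ 2, u : B → ℝ injective), a chamber C of the Dirichlet arrangement A(G,u) is bounded if and only if the corresponding acyclic orientation σ(C) has no sources and no sinks among the interior vertices I = V \ B. -/

import Mathlib

/-- A chamber of the Dirichlet arrangement (the connected component of a
point `x` of the complement `M`) is bounded iff the corresponding acyclic orientation
`σ(C)` (edge `ij` oriented `i → j` when `x_i > x_j`) has no sources and no sinks
among the interior vertices `V \ B`. -/
theorem dirichlet_chamber_bounded_iff_no_interior_source_sink
    (V : Type*) [Fintype V] (G : SimpleGraph V) (hconn : G.Connected)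
    (B : Set V) (hB2 : 2 ≤ Nat.card B)
    (hBindep : ∀ i ∈ B, ∀ j ∈ B, ¬ G.Adj i j)
    (u : V → ℝ) (hu : Set.InjOn u B)
    (M : Set (V → ℝ))
    (hM : M = {x | (∀ j ∈ B, x j = u j) ∧ ∀ i j : V, G.Adj i j → x i ≠ x j})
    (x : V → ℝ) (hx : x ∈ M) :
    Bornology.IsBounded (connectedComponentIn M x) ↔
      ∀ i : V, i ∉ B →
        (∃ j : V, G.Adj i j ∧ x j > x i) ∧ (∃ j : V, G.Adj i j ∧ x j < x i) := by
  classical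
  have hxM := hx
  rw [hM] at hxM
  obtain ⟨hxB, hxadj⟩ := hxM
  have hxmem : x ∈ connectedComponentIn M x := mem_connectedComponentIn hx
  -- Any point of `M` separates adjacent vertices, in particular points of the chamber.
  have hMadj : ∀ y ∈ M, ∀ i j : V, G.Adj i j → y i ≠ y j := by
    intro y hy
    rw [hM] at hy
    exact hy.2
  -- Sign constancy on the chamber.
  have hsign : ∀ y ∈ connectedComponentIn M x, ∀ i j : V, G.Adj i j → x i < x j → y i < y j := by
    intro y hy i j hadj hij
    by_contra hcon
    push_neg at hcon
    have hcont : ContinuousOn (fun z : V → ℝ => z j - z i) (connectedComponentIn M x) :=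
      ((continuous_apply j).sub (continuous_apply i)).continuousOn
    have h0 : (0 : ℝ) ∈ Set.Icc (y j - y i) (x j - x i) := ⟨by linarith, by linarith⟩
    obtain ⟨z, hz, hz0⟩ :=
      isPreconnected_connectedComponentIn.intermediate_value hy hxmem hcont h0
    have hzM : z ∈ M := connectedComponentIn_subset M x hz
    have hz0' : z j - z i = 0 := hz0
    exact hMadj z hzM i j hadj (by linarith : z i = z j)
  -- If some interior vertex has no larger (resp. no smaller) neighbor, a ray lies in the chamber.
  have hray : ∀ i : V, i ∉ B → ∀ t : ℝ, (∀ j : V, G.Adj i j → x j < x i + t ∧ x j < x i) ∨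
      (∀ j : V, G.Adj i j → x i + t < x j ∧ x i < x j) →
      Function.update x i (x i + t) ∈ M := by
    intro i hiB t ht
    rw [hM]
    refine ⟨?_, ?_⟩
    · intro j hjB
      rw [Function.update_of_ne (show j ≠ i from fun h => hiB (h ▸ hjB)) _ _]
      exact hxB j hjB
    · intro a b hab
      by_cases ha : a = i
      · subst ha
        have hbi : b ≠ a := fun h => G.loopless.irrefl a (h ▸ hab)
        rw [Function.update_self, Function.update_of_ne hbi]
        rcases ht with ht | ht
        · exact ((ht b hab).1).ne'
        · exact ((ht b hab).1).ne
      · rw [Function.update_of_ne ha]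
        by_cases hb : b = i
        · subst hb
          rw [Function.update_self]
          rcases ht with ht | ht
          · exact ((ht a hab.symm).1).ne
          · exact ((ht a hab.symm).1).ne'
        · rw [Function.update_of_ne hb]
          exact hMadj x hx a b hab
  -- The ray starting at `x` in direction `± e i` is contained in the chamber.
  have hraysub : ∀ i : V, i ∉ B → ∀ s : Set ℝ, IsPreconnected s → (0 : ℝ) ∈ s →
      (∀ t ∈ s, Function.update x i (x i + t) ∈ M) →
      (fun t : ℝ => Function.update x i (x i + t)) '' s ⊆ connectedComponentIn M x := by
    intro i hiB s hs h0 hmem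
    have hcont : Continuous fun t : ℝ => Function.update x i (x i + t) := by
      refine continuous_pi fun k => ?_
      by_cases hk : k = i
      · subst hk
        simpa [Function.update_self] using (continuous_add_left (x k))
      · simpa [Function.update_of_ne hk] using (continuous_const : Continuous fun _ : ℝ => x k)
    refine IsPreconnected.subset_connectedComponentIn (hs.image _ hcont.continuousOn) ?_ ?_
    · refine ⟨0, h0, ?_⟩
      simp [Function.update_eq_self]
    · rintro _ ⟨t, hts, rfl⟩
      exact hmem t hts
  constructor
  · -- bounded → no interior sources/sinks
    intro hbdd i hiB
    obtain ⟨C, hC⟩ := isBounded_iff_forall_norm_le.1 hbdd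
    have hC0 : 0 ≤ C := le_trans (norm_nonneg x) (hC x hxmem)
    constructor
    · by_contra hno
      push_neg at hno
      have hlt : ∀ j : V, G.Adj i j → x j < x i := fun j hj =>
        lt_of_le_of_ne (hno j hj) (hMadj x hx i j hj).symm
      set t : ℝ := C + |x i| + 1 with ht
      have hyM : Function.update x i (x i + t) ∈ connectedComponentIn M x := by
        refine hraysub i hiB (Set.Ici 0) isPreconnected_Ici (Set.self_mem_Ici) ?_
          ⟨t, by simp only [Set.mem_Ici, ht]; linarith [abs_nonneg (x i)], rfl⟩
        intro s hs
        refine hray i hiB s (Or.inl fun j hj => ⟨?_, hlt j hj⟩)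
        have := hlt j hj
        have : (0:ℝ) ≤ s := hs
        linarith [hlt j hj]
      have hnorm := hC _ hyM
      have h1 : ‖Function.update x i (x i + t) i‖ ≤ ‖Function.update x i (x i + t)‖ :=
        norm_le_pi_norm _ i
      rw [Function.update_self] at h1
      have h2 : x i + t ≤ |x i + t| := le_abs_self _
      have h3 : -|x i| ≤ x i := neg_abs_le _
      simp only [Real.norm_eq_abs] at h1
      linarith
    · by_contra hno
      push_neg at hno
      have hlt : ∀ j : V, G.Adj i j → x i < x j := fun j hj =>
        lt_of_le_of_ne (hno j hj) (hMadj x hx i j hj)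
      set t : ℝ := -(C + |x i| + 1) with ht
      have hyM : Function.update x i (x i + t) ∈ connectedComponentIn M x := by
        refine hraysub i hiB (Set.Iic 0) isPreconnected_Iic (Set.self_mem_Iic) ?_
          ⟨t, by simp only [Set.mem_Iic, ht]; linarith [abs_nonneg (x i)], rfl⟩
        intro s hs
        refine hray i hiB s (Or.inr fun j hj => ⟨?_, hlt j hj⟩)
        have : s ≤ (0:ℝ) := hs
        linarith [hlt j hj]
      have hnorm := hC _ hyM
      have h1 : ‖Function.update x i (x i + t) i‖ ≤ ‖Function.update x i (x i + t)‖ :=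
        norm_le_pi_norm _ i
      rw [Function.update_self] at h1
      have h2 : -(x i + t) ≤ |x i + t| := neg_le_abs _
      have h3 : x i ≤ |x i| := le_abs_self _
      simp only [Real.norm_eq_abs] at h1
      linarith
  · -- no interior sources/sinks → bounded
    intro h
    have hVne : (Finset.univ : Finset V).Nonempty := by
      have hBne : B.Nonempty := by
        rcases Set.eq_empty_or_nonempty B with hBe | hBne
        · rw [hBe] at hB2; simp at hB2
        · exact hBne
      obtain ⟨b, _⟩ := hBne
      exact ⟨b, Finset.mem_univ b⟩
    set K : ℝ := Finset.univ.sup' hVne fun v => |u v| with hK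
    rw [isBounded_iff_forall_norm_le]
    refine ⟨K, fun y hy => ?_⟩
    have hyM : y ∈ M := connectedComponentIn_subset M x hy
    have hyB : ∀ j ∈ B, y j = u j := by rw [hM] at hyM; exact hyM.1
    have hup : ∀ v : V, y v ≤ K := by
      intro v
      obtain ⟨w, -, hw⟩ := Finset.exists_max_image Finset.univ y hVne
      have hwB : w ∈ B := by
        by_contra hwB
        obtain ⟨j, hj, hjx⟩ := (h w hwB).1
        exact absurd (hsign y hy w j hj hjx) (not_lt.2 (hw j (Finset.mem_univ j)))
      calc y v ≤ y w := hw v (Finset.mem_univ v)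
        _ = u w := hyB w hwB
        _ ≤ |u w| := le_abs_self _
        _ ≤ K := by rw [hK]; exact Finset.le_sup' (fun v => |u v|) (Finset.mem_univ w)
    have hdown : ∀ v : V, -K ≤ y v := by
      intro v
      obtain ⟨w, -, hw⟩ := Finset.exists_min_image Finset.univ y hVne
      have hwB : w ∈ B := by
        by_contra hwB
        obtain ⟨j, hj, hjx⟩ := (h w hwB).2
        exact absurd (hsign y hy j w hj.symm hjx) (not_lt.2 (hw j (Finset.mem_univ j)))
      have h1 : -K ≤ u w := by
        have : |u w| ≤ K := by rw [hK]; exact Finset.le_sup' (fun v => |u v|) (Finset.mem_univ w)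
        linarith [neg_abs_le (u w)]
      calc -K ≤ u w := h1
        _ = y w := (hyB w hwB).symm
        _ ≤ y v := hw v (Finset.mem_univ v)
    have hK0 : (0:ℝ) ≤ K := by
      obtain ⟨v, hv⟩ := hVne
      rw [hK]
      exact le_trans (abs_nonneg (u v)) (Finset.le_sup' (fun v => |u v|) hv)
    rw [pi_norm_le_iff_of_nonneg hK0]
    intro v
    rw [Real.norm_eq_abs, abs_le]
    exact ⟨hdown v, hup v⟩
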